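/- Fix n ≥ 3 and i < j in {1,…,n}. If β and β′ are words in the generators of G_{n,p}^2 representing the same element of G_{n,p}^2, then w^p_{ij}(β) = w^p_{ij}(β′) in F_n^2. In other words, w^p_{ij} : G_{n,p}^2 → F_n^2 is well defined. -/

import Mathlib

namespace GnkBrunnian

/-! ## Index types for generators -/

/-- Validity of a pair index: `1 ≤ i < j ≤ n`. -/
abbrev P2ok (n : ℕ) (p : ℕ × ℕ) : Prop := 1 ≤ p.1 ∧ p.1 < p.2 ∧ p.2 ≤ n

/-- Index type for the generators `a_{ij}` of `G_n^2` (and `b_{ij}` of `PB_n`). -/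
abbrev PIdx (n : ℕ) := {p : ℕ × ℕ // P2ok n p}

/-- Validity of a triple index: `1 ≤ i < j < k ≤ n`. -/
abbrev T3ok (n : ℕ) (t : ℕ × ℕ × ℕ) : Prop :=
  1 ≤ t.1 ∧ t.1 < t.2.1 ∧ t.2.1 < t.2.2 ∧ t.2.2 ≤ n

/-- Index type for the generators `a_{ijk}` of `G_n^3`. -/
abbrev TIdx (n : ℕ) := {t : ℕ × ℕ × ℕ // T3ok n t}

def sort2 (a b : ℕ) : ℕ × ℕ := (min a b, max a b)

def sort3 (a b c : ℕ) : ℕ × ℕ × ℕ :=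
  (min a (min b c), a + b + c - min a (min b c) - max a (max b c), max a (max b c))

def pairSet {n : ℕ} (p : PIdx n) : Finset ℕ := {p.1.1, p.1.2}

def tripSet {n : ℕ} (t : TIdx n) : Finset ℕ := {t.1.1, t.1.2.1, t.1.2.2}

/-- Reindexing after deleting the strand `m` : indices above `m` are decreased by one. -/
def del (m x : ℕ) : ℕ := if m < x then x - 1 else x

/-! ## The group `G_n^2` -/

/-- The free-group letter `a_{\{a,b\}}` (trivial if the index is out of range). -/
def fgen2 (n a b : ℕ) : FreeGroup (PIdx n) :=
  if h : P2ok n (sort2 a b) then FreeGroup.of ⟨sort2 a b, h⟩ else 1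

/-- The defining relators of `G_n^2`. -/
def rels2 (n : ℕ) : Set (FreeGroup (PIdx n)) :=
  {r | ∃ a : PIdx n, r = .of a * .of a} ∪
  {r | ∃ i j k l : ℕ,
      1 ≤ i ∧ i ≤ n ∧ 1 ≤ j ∧ j ≤ n ∧ 1 ≤ k ∧ k ≤ n ∧ 1 ≤ l ∧ l ≤ n ∧
      i ≠ j ∧ i ≠ k ∧ i ≠ l ∧ j ≠ k ∧ j ≠ l ∧ k ≠ l ∧
      r = fgen2 n i j * fgen2 n k l * (fgen2 n i j)⁻¹ * (fgen2 n k l)⁻¹} ∪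
  {r | ∃ i j k : ℕ,
      1 ≤ i ∧ i ≤ n ∧ 1 ≤ j ∧ j ≤ n ∧ 1 ≤ k ∧ k ≤ n ∧ i ≠ j ∧ i ≠ k ∧ j ≠ k ∧
      r = fgen2 n i j * fgen2 n i k * fgen2 n j k *
          (fgen2 n j k * fgen2 n i k * fgen2 n i j)⁻¹}

/-- The group `G_n^2`. -/
abbrev G2 (n : ℕ) := PresentedGroup (rels2 n)

/-- The generator `a_{\{a,b\}}` of `G_n^2` (trivial if the index is out of range). -/
def ggen2 (n a b : ℕ) : G2 n :=
  if h : P2ok n (sort2 a b) then PresentedGroup.of ⟨sort2 a b, h⟩ else 1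

/-- The element of `G_n^2` represented by a word in the generators. -/
def toG2 {n : ℕ} (β : List (PIdx n)) : G2 n :=
  (β.map fun a => (PresentedGroup.of a : G2 n)).prod

/-! ## The group `G_n^3` -/

/-- The free-group letter `a_{\{a,b,c\}}` (trivial if the index is out of range). -/
def fgen3 (n a b c : ℕ) : FreeGroup (TIdx n) :=
  if h : T3ok n (sort3 a b c) then FreeGroup.of ⟨sort3 a b c, h⟩ else 1

/-- The defining relators of `G_n^3`. -/
def rels3 (n : ℕ) : Set (FreeGroup (TIdx n)) :=
  {r | ∃ a : TIdx n, r = .of a * .of a} ∪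
  {r | ∃ a b : TIdx n, (tripSet a ∩ tripSet b).card < 2 ∧
      r = .of a * .of b * (.of a)⁻¹ * (.of b)⁻¹} ∪
  {r | ∃ i j k l : ℕ,
      1 ≤ i ∧ i ≤ n ∧ 1 ≤ j ∧ j ≤ n ∧ 1 ≤ k ∧ k ≤ n ∧ 1 ≤ l ∧ l ≤ n ∧
      i ≠ j ∧ i ≠ k ∧ i ≠ l ∧ j ≠ k ∧ j ≠ l ∧ k ≠ l ∧
      r = fgen3 n i j k * fgen3 n i j l * fgen3 n i k l * fgen3 n j k l *
          (fgen3 n j k l * fgen3 n i k l * fgen3 n i j l * fgen3 n i j k)⁻¹}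

/-- The group `G_n^3`. -/
abbrev G3 (n : ℕ) := PresentedGroup (rels3 n)

/-- The generator `a_{\{a,b,c\}}` of `G_n^3` (trivial if the index is out of range). -/
def ggen3 (n a b c : ℕ) : G3 n :=
  if h : T3ok n (sort3 a b c) then PresentedGroup.of ⟨sort3 a b c, h⟩ else 1

/-- The element of `G_n^3` represented by a word in the generators. -/
def toG3 {n : ℕ} (β : List (TIdx n)) : G3 n :=
  (β.map fun a => (PresentedGroup.of a : G3 n)).prod

/-! ## The pure braid group `PB_n` (standard Artin/Birman presentation) -/

/-- The defining relators of the pure braid group on `n` strands, in the standard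
presentation on the generators `b_{ij} = A_{ij}`, `1 ≤ i < j ≤ n`. -/
def relsPB (n : ℕ) : Set (FreeGroup (PIdx n)) :=
  {x | ∃ r s i j : ℕ, P2ok n (r, s) ∧ P2ok n (i, j) ∧ (s < i ∨ (i < r ∧ s < j)) ∧
      x = (fgen2 n r s)⁻¹ * fgen2 n i j * fgen2 n r s * (fgen2 n i j)⁻¹} ∪
  {x | ∃ r s j : ℕ, 1 ≤ r ∧ r < s ∧ s < j ∧ j ≤ n ∧
      x = (fgen2 n r s)⁻¹ * fgen2 n s j * fgen2 n r s *
          (fgen2 n r j * fgen2 n s j * (fgen2 n r j)⁻¹)⁻¹} ∪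
  {x | ∃ r s j : ℕ, 1 ≤ r ∧ r < s ∧ s < j ∧ j ≤ n ∧
      x = (fgen2 n r s)⁻¹ * fgen2 n r j * fgen2 n r s *
          ((fgen2 n r j * fgen2 n s j) * fgen2 n r j * (fgen2 n r j * fgen2 n s j)⁻¹)⁻¹} ∪
  {x | ∃ r i s j : ℕ, 1 ≤ r ∧ r < i ∧ i < s ∧ s < j ∧ j ≤ n ∧
      x = (fgen2 n r s)⁻¹ * fgen2 n i j * fgen2 n r s *
          ((fgen2 n r j * fgen2 n s j * (fgen2 n r j)⁻¹ * (fgen2 n s j)⁻¹) * fgen2 n i j *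
           (fgen2 n r j * fgen2 n s j * (fgen2 n r j)⁻¹ * (fgen2 n s j)⁻¹)⁻¹)⁻¹}

/-- The pure braid group on `n` strands. -/
abbrev PB (n : ℕ) := PresentedGroup (relsPB n)

/-- The standard generator `b_{ij}` of `PB_n` (trivial if the index is out of range). -/
def pbgen (n a b : ℕ) : PB n :=
  if h : P2ok n (sort2 a b) then PresentedGroup.of ⟨sort2 a b, h⟩ else 1

/-! ## The elements `c^n_{i,j}` and the homomorphism `φ_n` -/

/-- `c^n_{i,j} = (∏_{k=j+1}^{n} a_{ijk}) * (∏_{k=1, k∉{i,j}}^{j-1} a_{ijk}) ∈ G_n^3`. -/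
def cElt (n i j : ℕ) : G3 n :=
  (((List.range' (j + 1) (n - j)).map fun k => ggen3 n i j k).prod) *
  (((List.range' 1 (j - 1)).map fun k => ggen3 n i j k).prod)

/-- The image of `b_{ij}` under `φ_n`:
`(c^n_{i,i+1})⁻¹ ⋯ (c^n_{i,j-1})⁻¹ (c^n_{i,j})² c^n_{i,j-1} ⋯ c^n_{i,i+1}`. -/
def phiElt (n i j : ℕ) : G3 n :=
  (((List.range' (i + 1) (j - 1 - i)).map fun m => (cElt n i m)⁻¹).prod) *
  (cElt n i j) ^ 2 *
  (((List.range' (i + 1) (j - 1 - i)).reverse.map fun m => cElt n i m).prod)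

/-- `q` is the strand-deletion homomorphism `q_m : G_n^3 → G_{n-1}^3`. -/
def IsShift3 (n m : ℕ) (q : G3 n →* G3 (n - 1)) : Prop :=
  ∀ i j k : ℕ, 1 ≤ i → i < j → j < k → k ≤ n →
    q (ggen3 n i j k) =
      if m = i ∨ m = j ∨ m = k then 1
      else ggen3 (n - 1) (del m i) (del m j) (del m k)

/-- `p` is the strand-deletion homomorphism `p_m : PB_n → PB_{n-1}`. -/
def IsShiftPB (n m : ℕ) (p : PB n →* PB (n - 1)) : Prop :=
  ∀ i j : ℕ, 1 ≤ i → i < j → j ≤ n →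
    p (pbgen n i j) =
      if m = i ∨ m = j then 1 else pbgen (n - 1) (del m i) (del m j)

/-- `φ` is the Manturov–Nikonov homomorphism `φ_n : PB_n → G_n^3`. -/
def IsPhi (n : ℕ) (φ : PB n →* G3 n) : Prop :=
  ∀ i j : ℕ, 1 ≤ i → i < j → j ≤ n → φ (pbgen n i j) = phiElt n i j

/-! ## Words and good condition -/

def good2 {n : ℕ} (β : List (PIdx n)) : Prop := ∀ a : PIdx n, Even (β.count a)

def good3 {n : ℕ} (β : List (TIdx n)) : Prop := ∀ a : TIdx n, Even (β.count a)

/-! ## Free products of copies of `ℤ/2` -/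

/-- The free product of copies of `ℤ/2ℤ` indexed by `ι`. -/
abbrev FP2 (ι : Type) := PresentedGroup {r : FreeGroup ι | ∃ a : ι, r = .of a * .of a}

/-- Indices `l ∈ {1,…,n} \ {i,j,k}`. -/
abbrev SIdx3 (n i j k : ℕ) := {l : ℕ // (1 ≤ l ∧ l ≤ n) ∧ l ≠ i ∧ l ≠ j ∧ l ≠ k}

/-- The group `F_n^3` (for the fixed triple `(i,j,k)`). -/
abbrev F3 (n i j k : ℕ) := FP2 (SIdx3 n i j k → ZMod 2 × ZMod 2)

/-- Indices `k ∈ {1,…,n} \ {i,j}`. -/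
abbrev SIdx2 (n i j : ℕ) := {l : ℕ // (1 ≤ l ∧ l ≤ n) ∧ l ≠ i ∧ l ≠ j}

/-- The group `F_n^2` (for the fixed pair `(i,j)`). -/
abbrev F2 (n i j : ℕ) := FP2 (SIdx2 n i j → ZMod 2)

/-! ## The MN-invariants `w_{(i,j)}` and `w_{(i,j,k)}` -/

/-- The number of occurrences of the generator `a_{\{a,b\}}` in a word over `G_n^2`. -/
def cnt2 {n : ℕ} (β : List (PIdx n)) (a b : ℕ) : ℕ :=
  (β.filter fun x => decide (pairSet x = ({a, b} : Finset ℕ))).length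

/-- The number of occurrences of the generator `a_{\{a,b,c\}}` in a word over `G_n^3`. -/
def cnt3 {n : ℕ} (β : List (TIdx n)) (a b c : ℕ) : ℕ :=
  (β.filter fun x => decide (tripSet x = ({a, b, c} : Finset ℕ))).length

/-- `i_c` for an occurrence of `a_{ij}` with prefix `pre`: `i_c(k) = N_{ik} + N_{jk} (mod 2)`. -/
def iC2 {n : ℕ} (i j : ℕ) (pre : List (PIdx n)) : SIdx2 n i j → ZMod 2 :=
  fun k => ((cnt2 pre i k.1 + cnt2 pre j k.1 : ℕ) : ZMod 2)

/-- The MN-invariant `w_{(i,j)}` of a word over `G_n^2`. -/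
def w2 {n : ℕ} (i j : ℕ) (β : List (PIdx n)) : F2 n i j :=
  (((β.zipIdx.map Prod.swap).filter fun x => decide (pairSet x.2 = ({i, j} : Finset ℕ))).map
    fun x => (PresentedGroup.of (iC2 i j (β.take x.1)) : F2 n i j)).prod

/-- `i_c` for an occurrence of `a_{ijk}` with prefix `pre`:
`i_c(l) = (N_{jkl} + N_{ijl}, N_{ikl} + N_{ijl}) (mod 2)`. -/
def iC3 {n : ℕ} (i j k : ℕ) (pre : List (TIdx n)) : SIdx3 n i j k → ZMod 2 × ZMod 2 :=
  fun l => (((cnt3 pre j k l.1 + cnt3 pre i j l.1 : ℕ) : ZMod 2),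
            ((cnt3 pre i k l.1 + cnt3 pre i j l.1 : ℕ) : ZMod 2))

/-- The MN-invariant `w_{(i,j,k)}` of a word over `G_n^3`. -/
def w3 {n : ℕ} (i j k : ℕ) (β : List (TIdx n)) : F3 n i j k :=
  (((β.zipIdx.map Prod.swap).filter fun x => decide (tripSet x.2 = ({i, j, k} : Finset ℕ))).map
    fun x => (PresentedGroup.of (iC3 i j k (β.take x.1)) : F3 n i j k)).prod

/-! ## Explicit words for `c^n_{i,j}` and `φ_n(b_{ij})` -/

def tripMkS (n a b c : ℕ) : Option (TIdx n) :=
  if h : T3ok n (sort3 a b c) then some ⟨sort3 a b c, h⟩ else none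

def pairMkS (n a b : ℕ) : Option (PIdx n) :=
  if h : P2ok n (sort2 a b) then some ⟨sort2 a b, h⟩ else none

/-- The defining word of `c^n_{i,j}`. -/
def cWord (n i j : ℕ) : List (TIdx n) :=
  ((List.range' (j + 1) (n - j)).filterMap fun k => tripMkS n i j k) ++
  ((List.range' 1 (j - 1)).filterMap fun k => tripMkS n i j k)

/-- The defining word of `φ_n(b_{ij})`, with the inverses of the `c`-words expanded using
`a⁻¹ = a` for generators (i.e. by reversing the words). -/
def phiWord (n i j : ℕ) : List (TIdx n) :=
  (((List.range' (i + 1) (j - 1 - i)).map fun m => (cWord n i m).reverse).flatten) ++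
  cWord n i j ++ cWord n i j ++
  (((List.range' (i + 1) (j - 1 - i)).reverse.map fun m => cWord n i m).flatten)

/-! ## The group `G_{n,p}^2` (parity) -/

/-- Index type for the generators `a_{ij}^ε` of `G_{n,p}^2`. -/
abbrev PPIdx (n : ℕ) := PIdx n × ZMod 2

def fgenP2 (n a b : ℕ) (e : ZMod 2) : FreeGroup (PPIdx n) :=
  if h : P2ok n (sort2 a b) then FreeGroup.of (⟨sort2 a b, h⟩, e) else 1

/-- The defining relators of `G_{n,p}^2`. -/
def relsP2 (n : ℕ) : Set (FreeGroup (PPIdx n)) :=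
  {r | ∃ a : PPIdx n, r = .of a * .of a} ∪
  {r | ∃ (i j k l : ℕ) (e e' : ZMod 2),
      1 ≤ i ∧ i ≤ n ∧ 1 ≤ j ∧ j ≤ n ∧ 1 ≤ k ∧ k ≤ n ∧ 1 ≤ l ∧ l ≤ n ∧
      i ≠ j ∧ i ≠ k ∧ i ≠ l ∧ j ≠ k ∧ j ≠ l ∧ k ≠ l ∧
      r = fgenP2 n i j e * fgenP2 n k l e' * (fgenP2 n i j e)⁻¹ * (fgenP2 n k l e')⁻¹} ∪
  {r | ∃ (i j k : ℕ) (e1 e2 e3 : ZMod 2),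
      1 ≤ i ∧ i < j ∧ j < k ∧ k ≤ n ∧ e1 + e2 + e3 = 0 ∧
      r = fgenP2 n i j e1 * fgenP2 n i k e2 * fgenP2 n j k e3 *
          (fgenP2 n j k e3 * fgenP2 n i k e2 * fgenP2 n i j e1)⁻¹}

/-- The group `G_{n,p}^2`. -/
abbrev GP2 (n : ℕ) := PresentedGroup (relsP2 n)

/-- The element of `G_{n,p}^2` represented by a word in the generators. -/
def toGP2 {n : ℕ} (β : List (PPIdx n)) : GP2 n :=
  (β.map fun a => (PresentedGroup.of a : GP2 n)).prod

/-! ## The parity invariant `w^p_{ij}` on `G_{n,p}^2` -/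

/-- The number of occurrences of `a_{\{a,b\}}^e` in a word over `G_{n,p}^2`. -/
def cntP2 {n : ℕ} (β : List (PPIdx n)) (a b : ℕ) (e : ZMod 2) : ℕ :=
  (β.filter fun x => decide (pairSet x.1 = ({a, b} : Finset ℕ) ∧ x.2 = e)).length

/-- `i^p_c` for an occurrence of `a_{ij}^e` with prefix `pre`. -/
def iCP2 {n : ℕ} (i j : ℕ) (e : ZMod 2) (pre : List (PPIdx n)) : SIdx2 n i j → ZMod 2 :=
  fun k =>
    if e = 0 then ((cntP2 pre i k.1 0 + cntP2 pre j k.1 0 : ℕ) : ZMod 2)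
    else ((cntP2 pre i k.1 0 + cntP2 pre j k.1 1 : ℕ) : ZMod 2)

/-- The invariant `w^p_{ij}` of a word over `G_{n,p}^2`. -/
def wP2 {n : ℕ} (i j : ℕ) (β : List (PPIdx n)) : F2 n i j :=
  (((β.zipIdx.map Prod.swap).filter fun x => decide (pairSet x.2.1 = ({i, j} : Finset ℕ))).map
    fun x => (PresentedGroup.of (iCP2 i j x.2.2 (β.take x.1)) : F2 n i j)).prod

/-! ## The map `ψ_l : G_{n+1}^2 → G_{n,p}^2` -/

/-- The word over `G_{n,p}^2` obtained from a word over `G_{n+1}^2` by deleting the strand `l`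
and recording parities. -/
def psiWord (n l : ℕ) (β : List (PIdx (n + 1))) : List (PPIdx n) :=
  (β.zipIdx.map Prod.swap).filterMap fun x =>
    if l = x.2.1.1 ∨ l = x.2.1.2 then none
    else (pairMkS n (del l x.2.1.1) (del l x.2.1.2)).map fun p =>
      (p, ((cnt2 (β.take x.1) x.2.1.1 l + cnt2 (β.take x.1) x.2.1.2 l : ℕ) : ZMod 2))

/-! ## The group `G_{n,p}^3` (parity) -/

/-- Index type for the generators `a_{ijk}^ε` of `G_{n,p}^3`. -/
abbrev TPIdx (n : ℕ) := TIdx n × ZMod 2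

def fgenP3 (n a b c : ℕ) (e : ZMod 2) : FreeGroup (TPIdx n) :=
  if h : T3ok n (sort3 a b c) then FreeGroup.of (⟨sort3 a b c, h⟩, e) else 1

/-- The defining relators of `G_{n,p}^3`. -/
def relsP3 (n : ℕ) : Set (FreeGroup (TPIdx n)) :=
  {r | ∃ a : TPIdx n, r = .of a * .of a} ∪
  {r | ∃ a b : TPIdx n, (tripSet a.1 ∩ tripSet b.1).card < 2 ∧
      r = (.of a * .of b) ^ 2} ∪
  {r | ∃ (i j k l : ℕ) (ei ej ek el : ZMod 2),
      1 ≤ i ∧ i ≤ n ∧ 1 ≤ j ∧ j ≤ n ∧ 1 ≤ k ∧ k ≤ n ∧ 1 ≤ l ∧ l ≤ n ∧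
      i ≠ j ∧ i ≠ k ∧ i ≠ l ∧ j ≠ k ∧ j ≠ l ∧ k ≠ l ∧
      (if max (max i j) (max k l) = i then ej + ek + el
       else if max (max i j) (max k l) = j then ei + ek + el
       else if max (max i j) (max k l) = k then ei + ej + el
       else ei + ej + ek) = 0 ∧
      r = (fgenP3 n i j k el * fgenP3 n i j l ek * fgenP3 n i k l ej * fgenP3 n j k l ei) ^ 2}

/-- The group `G_{n,p}^3`. -/
abbrev GP3 (n : ℕ) := PresentedGroup (relsP3 n)

/-- The element of `G_{n,p}^3` represented by a word in the generators. -/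
def toGP3 {n : ℕ} (β : List (TPIdx n)) : GP3 n :=
  (β.map fun a => (PresentedGroup.of a : GP3 n)).prod

/-! ## The map `f : G_{n+1}^3 → G_{n,p}^3` -/

/-- The word over `G_{n,p}^3` obtained from a word over `G_{n+1}^3` by deleting the letters
containing the index `n+1` and recording parities. -/
def fWord (n : ℕ) (β : List (TIdx (n + 1))) : List (TPIdx n) :=
  (β.zipIdx.map Prod.swap).filterMap fun x =>
    if x.2.1.2.2 = n + 1 then none
    else (tripMkS n x.2.1.1 x.2.1.2.1 x.2.1.2.2).map fun t =>
      (t, ((cnt3 (β.take x.1) x.2.1.2.1 x.2.1.2.2 (n + 1) +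
            cnt3 (β.take x.1) x.2.1.1 x.2.1.2.2 (n + 1) : ℕ) : ZMod 2))

/-! ## The parity invariant `w^p_{ijk}` on `G_{n,p}^3` -/

/-- The group `F_n^3` with values in `ℤ/2` (for the parity invariant). -/
abbrev F3p (n i j k : ℕ) := FP2 (SIdx3 n i j k → ZMod 2)

/-- The number of occurrences of `a_{\{a,b,c\}}^e` in a word over `G_{n,p}^3`. -/
def cntP3 {n : ℕ} (β : List (TPIdx n)) (a b c : ℕ) (e : ZMod 2) : ℕ :=
  (β.filter fun x => decide (tripSet x.1 = ({a, b, c} : Finset ℕ) ∧ x.2 = e)).length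

/-- `i^p_c` for an occurrence of `a_{ijk}^e` with prefix `pre` (here `k > i, j`). -/
def iCP3 {n : ℕ} (i j k : ℕ) (e : ZMod 2) (pre : List (TPIdx n)) : SIdx3 n i j k → ZMod 2 :=
  fun l =>
    if e = 0 then
      (if k < l.1 then
        ((cntP3 pre i k l.1 0 + cntP3 pre j k l.1 0 + cntP3 pre i j l.1 1 : ℕ) : ZMod 2)
      else ((cntP3 pre i k l.1 0 + cntP3 pre j k l.1 0 : ℕ) : ZMod 2))
    else
      (if k < l.1 then
        ((cntP3 pre i k l.1 0 + cntP3 pre j k l.1 1 + cntP3 pre i j l.1 0 : ℕ) : ZMod 2)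
      else ((cntP3 pre i k l.1 0 + cntP3 pre j k l.1 1 : ℕ) : ZMod 2))

/-- The invariant `w^p_{ijk}` of a word over `G_{n,p}^3`. -/
def wP3 {n : ℕ} (i j k : ℕ) (β : List (TPIdx n)) : F3p n i j k :=
  (((β.zipIdx.map Prod.swap).filter fun x => decide (tripSet x.2.1 = ({i, j, k} : Finset ℕ))).map
    fun x => (PresentedGroup.of (iCP3 i j k x.2.2 (β.take x.1)) : F3p n i j k)).prod

section Statement10Aux

/-! Auxiliary development for `statement_10`. -/

/-- The state group: parities of counts of each generator. -/
abbrev Sg (n : ℕ) := PPIdx n → ZMod 2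

def dl {n : ℕ} (a : PPIdx n) : Sg n := fun x => if x = a then 1 else 0

def stt {n : ℕ} (β : List (PPIdx n)) : Sg n := fun x => ((β.count x : ℕ) : ZMod 2)

def sBar {n : ℕ} (s : Sg n) (a b : ℕ) (e : ZMod 2) : ZMod 2 :=
  if h : P2ok n (sort2 a b) then s (⟨sort2 a b, h⟩, e) else 0

def shf (i j : ℕ) {n : ℕ} (s : Sg n) (e : ZMod 2) : SIdx2 n i j → ZMod 2 :=
  fun k => sBar s i k.1 0 + sBar s j k.1 e

abbrev Wg (n i j : ℕ) := FP2 ((SIdx2 n i j → ZMod 2) × ZMod 2)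

lemma fp2_sq {ι : Type} (a : ι) :
    (PresentedGroup.of a : FP2 ι) * PresentedGroup.of a = 1 := by
  have h : (FreeGroup.of a * FreeGroup.of a) ∈
      Subgroup.normalClosure {r : FreeGroup ι | ∃ b : ι, r = .of b * .of b} :=
    Subgroup.subset_normalClosure ⟨a, rfl⟩
  show (QuotientGroup.mk (FreeGroup.of a * FreeGroup.of a) : FP2 ι) = 1
  rw [QuotientGroup.eq_one_iff]
  exact h

lemma shf_add {n : ℕ} (i j : ℕ) (s t : Sg n) (e : ZMod 2) :
    shf i j (s + t) e = shf i j s e + shf i j t e := by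
  funext k
  simp only [shf, sBar, Pi.add_apply]
  split_ifs <;> ring

lemma shf_zero {n : ℕ} (i j : ℕ) (e : ZMod 2) : shf i j (0 : Sg n) e = 0 := by
  funext k
  simp only [shf, sBar, Pi.zero_apply]
  split_ifs <;> simp

lemma sg_add_self {n : ℕ} (s : Sg n) : s + s = 0 :=
  funext fun _ => CharTwo.add_self_eq_zero _

def homW (i j : ℕ) {n : ℕ} (s : Sg n) : Wg n i j →* Wg n i j :=
  PresentedGroup.toGroup
    (f := fun a => (PresentedGroup.of (a.1 + shf i j s a.2, a.2) : Wg n i j))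
    (by rintro r ⟨a, rfl⟩
        simp only [map_mul, FreeGroup.lift_apply_of]
        exact fp2_sq _)

lemma homW_of {n : ℕ} (i j : ℕ) (s : Sg n) (a : (SIdx2 n i j → ZMod 2) × ZMod 2) :
    homW i j s (PresentedGroup.of a) = PresentedGroup.of (a.1 + shf i j s a.2, a.2) :=
  PresentedGroup.toGroup.of _

lemma homW_homW {n : ℕ} (i j : ℕ) (s t : Sg n) (x : Wg n i j) :
    homW i j s (homW i j t x) = homW i j (s + t) x := by
  have h : (homW i j s).comp (homW i j t) = homW (n := n) i j (s + t) := by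
    apply PresentedGroup.ext
    intro a
    simp only [MonoidHom.comp_apply, homW_of]
    have : a.1 + shf i j t a.2 + shf i j s a.2 = a.1 + shf i j (s + t) a.2 := by
      rw [shf_add]; abel
    rw [this]
  exact DFunLike.congr_fun h x

lemma homW_zero {n : ℕ} (i j : ℕ) : homW (n := n) i j 0 = MonoidHom.id _ := by
  apply PresentedGroup.ext
  intro a
  simp [homW_of, shf_zero]

def autW (i j : ℕ) {n : ℕ} (s : Sg n) : MulAut (Wg n i j) where
  toFun := homW i j s
  invFun := homW i j s
  left_inv x := by rw [homW_homW, sg_add_self, homW_zero]; rfl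
  right_inv x := by rw [homW_homW, sg_add_self, homW_zero]; rfl
  map_mul' := map_mul _

def phiA (i j n : ℕ) : Multiplicative (Sg n) →* MulAut (Wg n i j) where
  toFun g := autW i j g.toAdd
  map_one' := MulEquiv.ext fun x => by
    show homW i j (0 : Sg n) x = x
    rw [homW_zero]; rfl
  map_mul' g h := MulEquiv.ext fun x => by
    rw [MulAut.mul_apply]
    exact (homW_homW i j g.toAdd h.toAdd x).symm

abbrev Hg (n i j : ℕ) := (Wg n i j) ⋊[phiA i j n] Multiplicative (Sg n)

def Fg (i j : ℕ) {n : ℕ} (a : PPIdx n) : Hg n i j :=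
  ⟨if pairSet a.1 = ({i, j} : Finset ℕ)
      then PresentedGroup.of ((0 : SIdx2 n i j → ZMod 2), a.2) else 1,
   Multiplicative.ofAdd (dl a)⟩

lemma Fg_left {n : ℕ} (i j : ℕ) (a : PPIdx n) :
    (Fg i j a).left = if pairSet a.1 = ({i, j} : Finset ℕ)
      then PresentedGroup.of ((0 : SIdx2 n i j → ZMod 2), a.2) else 1 := rfl

lemma Fg_right {n : ℕ} (i j : ℕ) (a : PPIdx n) :
    (Fg i j a).right = Multiplicative.ofAdd (dl a) := rfl

lemma phiA_ofAdd_apply {n : ℕ} (i j : ℕ) (s : Sg n) (w : Wg n i j) :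
    phiA i j n (Multiplicative.ofAdd s) w = homW i j s w := rfl

lemma pair_eq_pair {a b c d : ℕ} :
    ({a, b} : Finset ℕ) = {c, d} ↔ (a = c ∧ b = d) ∨ (a = d ∧ b = c) := by
  constructor
  · intro h
    have h1 : a = c ∨ a = d := by
      have : a ∈ ({c, d} : Finset ℕ) := by rw [← h]; simp
      simpa using this
    have h2 : b = c ∨ b = d := by
      have : b ∈ ({c, d} : Finset ℕ) := by rw [← h]; simp
      simpa using this
    have h3 : c = a ∨ c = b := by
      have : c ∈ ({a, b} : Finset ℕ) := by rw [h]; simp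
      simpa using this
    have h4 : d = a ∨ d = b := by
      have : d ∈ ({a, b} : Finset ℕ) := by rw [h]; simp
      simpa using this
    omega
  · rintro (⟨rfl, rfl⟩ | ⟨rfl, rfl⟩)
    · rfl
    · exact Finset.pair_comm a b

lemma pairSet_sort2 {n : ℕ} (a b : ℕ) (h : P2ok n (sort2 a b)) :
    pairSet (⟨sort2 a b, h⟩ : PIdx n) = {a, b} := by
  rcases le_total a b with hab | hab
  · simp [pairSet, sort2, min_eq_left hab, max_eq_right hab]
  · simp [pairSet, sort2, min_eq_right hab, max_eq_left hab, Finset.pair_comm]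

lemma eq_letter_iff {n : ℕ} (a : PPIdx n) (c d : ℕ) (e : ZMod 2) (h : P2ok n (sort2 c d)) :
    ((⟨⟨sort2 c d, h⟩, e⟩ : PPIdx n) = a) ↔ (pairSet a.1 = {c, d} ∧ a.2 = e) := by
  constructor
  · rintro rfl
    exact ⟨pairSet_sort2 c d h, rfl⟩
  · rintro ⟨hp, he⟩
    obtain ⟨⟨⟨x, y⟩, hxy⟩, a2⟩ := a
    have hx : x < y := hxy.2.1
    have h2 := pair_eq_pair.mp hp
    have hsort : sort2 c d = (x, y) := by
      unfold sort2
      rcases h2 with ⟨rfl, rfl⟩ | ⟨rfl, rfl⟩ <;>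
        · simp only [Prod.mk.injEq]
          omega
    subst he
    simp only [Prod.mk.injEq, Subtype.mk.injEq, hsort, and_self]

lemma shf_dl {n : ℕ} {i j : ℕ} (h1i : 1 ≤ i) (hij : i < j) (hjn : j ≤ n)
    (a : PPIdx n) (e : ZMod 2) (k : SIdx2 n i j) :
    shf i j (dl a) e k =
      (if pairSet a.1 = ({i, k.1} : Finset ℕ) ∧ a.2 = 0 then 1 else 0) +
      (if pairSet a.1 = ({j, k.1} : Finset ℕ) ∧ a.2 = e then 1 else 0) := by
  have hk := k.2
  have hik : P2ok n (sort2 i k.1) := by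
    show 1 ≤ min i k.1 ∧ min i k.1 < max i k.1 ∧ max i k.1 ≤ n
    omega
  have hjk : P2ok n (sort2 j k.1) := by
    show 1 ≤ min j k.1 ∧ min j k.1 < max j k.1 ∧ max j k.1 ≤ n
    omega
  show sBar (dl a) i k.1 0 + sBar (dl a) j k.1 e = _
  rw [sBar, dif_pos hik, sBar, dif_pos hjk]
  unfold dl
  congr 1
  · exact if_congr (eq_letter_iff a i k.1 0 hik) rfl rfl
  · exact if_congr (eq_letter_iff a j k.1 e hjk) rfl rfl

lemma stt_nil {n : ℕ} : stt ([] : List (PPIdx n)) = 0 := by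
  funext x; simp [stt]

lemma stt_append {n : ℕ} (pre : List (PPIdx n)) (a : PPIdx n) :
    stt (pre ++ [a]) = stt pre + dl a := by
  funext x
  simp only [stt, dl, List.count_append, Pi.add_apply, Nat.cast_add]
  congr 1
  by_cases hx : x = a
  · subst hx; simp
  · rw [List.count_eq_zero.mpr (by simp [hx]), if_neg hx]
    simp

lemma stt_apply_sorted {n : ℕ} (β : List (PPIdx n)) (c d : ℕ) (e : ZMod 2)
    (h : P2ok n (sort2 c d)) :
    stt β (⟨sort2 c d, h⟩, e) = ((cntP2 β c d e : ℕ) : ZMod 2) := by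
  unfold stt cntP2
  congr 1
  induction β with
  | nil => rfl
  | cons b β ih =>
    rw [List.count_cons, List.filter_cons]
    by_cases hb : (pairSet b.1 = ({c, d} : Finset ℕ) ∧ b.2 = e)
    · have hbe : (⟨⟨sort2 c d, h⟩, e⟩ : PPIdx n) = b := (eq_letter_iff b c d e h).mpr hb
      rw [if_pos (show (decide _) = true by simpa using hb), List.length_cons,
        if_pos (by rw [← hbe, beq_self_eq_true]), ih]
    · have hne : (⟨⟨sort2 c d, h⟩, e⟩ : PPIdx n) ≠ b := fun hh => hb ((eq_letter_iff b c d e h).mp hh)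
      rw [if_neg (show ¬ (decide _) = true by simpa using hb),
        if_neg (by simpa using (Ne.symm hne)), ih, add_zero]

lemma zmod2_cases (e : ZMod 2) : e = 0 ∨ e = 1 := by
  revert e; decide

lemma shf_stt {n : ℕ} {i j : ℕ} (h1i : 1 ≤ i) (hij : i < j) (hjn : j ≤ n)
    (β : List (PPIdx n)) (e : ZMod 2) :
    shf i j (stt β) e = iCP2 i j e β := by
  funext k
  have hk := k.2
  have hik : P2ok n (sort2 i k.1) := by
    show 1 ≤ min i k.1 ∧ min i k.1 < max i k.1 ∧ max i k.1 ≤ n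
    omega
  have hjk : P2ok n (sort2 j k.1) := by
    show 1 ≤ min j k.1 ∧ min j k.1 < max j k.1 ∧ max j k.1 ≤ n
    omega
  show sBar (stt β) i k.1 0 + sBar (stt β) j k.1 e = iCP2 i j e β k
  rw [sBar, dif_pos hik, sBar, dif_pos hjk, stt_apply_sorted, stt_apply_sorted]
  unfold iCP2
  rcases zmod2_cases e with rfl | rfl
  · rw [if_pos rfl]; push_cast; ring
  · rw [if_neg (by decide)]; push_cast; ring

/-! ### Recursive description of the invariant -/

def grec (i j : ℕ) {n : ℕ} {G : Type*} [Monoid G] (g : ZMod 2 → List (PPIdx n) → G) :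
    List (PPIdx n) → List (PPIdx n) → G
  | _, [] => 1
  | pre, a :: β =>
      (if pairSet a.1 = ({i, j} : Finset ℕ) then g a.2 pre else 1) * grec i j g (pre ++ [a]) β

lemma grec_eq (i j : ℕ) {n : ℕ} {G : Type*} [Monoid G] (g : ZMod 2 → List (PPIdx n) → G) :
    ∀ (β pre : List (PPIdx n)),
      ((((β.zipIdx pre.length).map Prod.swap).filter fun x =>
          decide (pairSet x.2.1 = ({i, j} : Finset ℕ))).map
        fun x => g x.2.2 ((pre ++ β).take x.1)).prod = grec i j g pre β
  | [], pre => by simp [grec]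
  | a :: β, pre => by
    rw [List.zipIdx_cons, List.map_cons, List.filter_cons]
    have hlen : pre.length + 1 = (pre ++ [a]).length := by simp
    have happ : pre ++ a :: β = (pre ++ [a]) ++ β := by simp
    by_cases hc : pairSet a.1 = ({i, j} : Finset ℕ)
    · rw [if_pos (by simpa using hc), List.map_cons, List.prod_cons]
      show g a.2 ((pre ++ a :: β).take pre.length) * _ = grec i j g pre (a :: β)
      rw [List.take_left, show grec i j g pre (a :: β) =
        (if pairSet a.1 = ({i, j} : Finset ℕ) then g a.2 pre else 1) * grec i j g (pre ++ [a]) β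
        from rfl, if_pos hc]
      congr 1
      rw [happ, hlen]
      exact grec_eq i j g β (pre ++ [a])
    · rw [if_neg (by simpa using hc), show grec i j g pre (a :: β) =
        (if pairSet a.1 = ({i, j} : Finset ℕ) then g a.2 pre else 1) * grec i j g (pre ++ [a]) β
        from rfl, if_neg hc, one_mul, happ, hlen]
      exact grec_eq i j g β (pre ++ [a])

def gF2 (i j : ℕ) {n : ℕ} : ZMod 2 → List (PPIdx n) → F2 n i j := fun e pre =>
  PresentedGroup.of (iCP2 i j e pre)

def gW (i j : ℕ) {n : ℕ} : ZMod 2 → List (PPIdx n) → Wg n i j := fun e pre =>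
  PresentedGroup.of (iCP2 i j e pre, e)

lemma wP2_eq_grec {n : ℕ} (i j : ℕ) (β : List (PPIdx n)) :
    wP2 i j β = grec i j (gF2 i j) [] β := by
  rw [← grec_eq i j (gF2 i j) β []]
  rfl

def piW (i j : ℕ) {n : ℕ} : Wg n i j →* F2 n i j :=
  PresentedGroup.toGroup (f := fun a => PresentedGroup.of a.1)
    (by rintro r ⟨a, rfl⟩
        simp only [map_mul, FreeGroup.lift_apply_of]
        exact fp2_sq _)

lemma piW_grec {n : ℕ} (i j : ℕ) (β : List (PPIdx n)) :
    ∀ pre, piW i j (grec i j (gW i j) pre β) = grec i j (gF2 i j) pre β := by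
  induction β with
  | nil => intro pre; simp [grec]
  | cons a β ih =>
    intro pre
    show piW i j (_ * _) = _ * _
    rw [map_mul, ih (pre ++ [a])]
    congr 1
    by_cases hc : pairSet a.1 = ({i, j} : Finset ℕ)
    · rw [if_pos hc, if_pos hc]
      exact PresentedGroup.toGroup.of _
    · rw [if_neg hc, if_neg hc, map_one]

lemma grec_gW_eq {n : ℕ} {i j : ℕ} (h1i : 1 ≤ i) (hij : i < j) (hjn : j ≤ n)
    (β : List (PPIdx n)) :
    ∀ pre, grec i j (gW i j) pre β = homW i j (stt pre) (((β.map (Fg i j)).prod).left) := by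
  induction β with
  | nil =>
    intro pre
    show (1 : Wg n i j) = homW i j (stt pre) ((1 : Hg n i j).left)
    rw [SemidirectProduct.one_left, map_one]
  | cons a β ih =>
    intro pre
    rw [List.map_cons, List.prod_cons, SemidirectProduct.mul_left,
      map_mul (homW i j (stt pre)),
      show phiA i j n ((Fg i j a).right) ((β.map (Fg i j)).prod).left
        = homW i j (dl a) ((β.map (Fg i j)).prod).left from rfl,
      homW_homW]
    show (if pairSet a.1 = ({i, j} : Finset ℕ) then gW i j a.2 pre else 1) *
        grec i j (gW i j) (pre ++ [a]) β = _
    rw [ih (pre ++ [a]), stt_append]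
    congr 1
    by_cases hc : pairSet a.1 = ({i, j} : Finset ℕ)
    · rw [if_pos hc, Fg_left, if_pos hc, homW_of]
      show PresentedGroup.of (iCP2 i j a.2 pre, a.2) = _
      rw [zero_add, shf_stt h1i hij hjn]
    · rw [if_neg hc, Fg_left, if_neg hc, map_one]

lemma wP2_through {n : ℕ} {i j : ℕ} (h1i : 1 ≤ i) (hij : i < j) (hjn : j ≤ n)
    (β : List (PPIdx n)) :
    wP2 i j β = piW i j (((β.map (Fg i j)).prod).left) := by
  rw [wP2_eq_grec, ← piW_grec, grec_gW_eq h1i hij hjn β [], stt_nil, homW_zero]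
  rfl

/-! ### Relator verification -/

lemma Fg_sq {n : ℕ} {i j : ℕ} (h1i : 1 ≤ i) (hij : i < j) (hjn : j ≤ n) (a : PPIdx n) :
    Fg i j a * Fg i j a = 1 := by
  apply SemidirectProduct.ext
  · rw [SemidirectProduct.mul_left, SemidirectProduct.one_left, Fg_right, phiA_ofAdd_apply]
    by_cases hc : pairSet a.1 = ({i, j} : Finset ℕ)
    · rw [Fg_left, if_pos hc, homW_of]
      have hs : shf i j (dl a) a.2 = 0 := by
        funext k
        have hk := k.2
        rw [shf_dl h1i hij hjn, Pi.zero_apply, if_neg, if_neg, add_zero]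
        · rintro ⟨hp, -⟩
          rw [hc] at hp
          rcases pair_eq_pair.mp hp with ⟨h1, h2⟩ | ⟨h1, h2⟩ <;> omega
        · rintro ⟨hp, -⟩
          rw [hc] at hp
          rcases pair_eq_pair.mp hp with ⟨h1, h2⟩ | ⟨h1, h2⟩ <;> omega
      show PresentedGroup.of _ * PresentedGroup.of _ = 1
      rw [hs, zero_add]
      exact fp2_sq _
    · rw [Fg_left, if_neg hc, map_one, mul_one]
  · rw [SemidirectProduct.mul_right, SemidirectProduct.one_right, Fg_right, ← ofAdd_add,
      sg_add_self]
    rfl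

lemma Fg_comm {n : ℕ} {i j : ℕ} (h1i : 1 ≤ i) (hij : i < j) (hjn : j ≤ n) (x y : PPIdx n)
    (hd1 : x.1.1.1 ≠ y.1.1.1) (hd2 : x.1.1.1 ≠ y.1.1.2)
    (hd3 : x.1.1.2 ≠ y.1.1.1) (hd4 : x.1.1.2 ≠ y.1.1.2) :
    Fg i j x * Fg i j y = Fg i j y * Fg i j x := by
  have hpx : pairSet x.1 = {x.1.1.1, x.1.1.2} := rfl
  have hpy : pairSet y.1 = {y.1.1.1, y.1.1.2} := rfl
  apply SemidirectProduct.ext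
  · rw [SemidirectProduct.mul_left, SemidirectProduct.mul_left, Fg_right, Fg_right,
      phiA_ofAdd_apply, phiA_ofAdd_apply]
    by_cases cx : pairSet x.1 = ({i, j} : Finset ℕ) <;>
      by_cases cy : pairSet y.1 = ({i, j} : Finset ℕ)
    · exfalso
      rw [hpx] at cx; rw [hpy] at cy
      rcases pair_eq_pair.mp cx with ⟨e1, e2⟩ | ⟨e1, e2⟩ <;>
        rcases pair_eq_pair.mp cy with ⟨e3, e4⟩ | ⟨e3, e4⟩ <;> omega
    · rw [Fg_left (a := y), if_neg cy, map_one, mul_one, Fg_left (a := x), if_pos cx,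
        one_mul, homW_of]
      have hs : shf i j (dl y) x.2 = 0 := by
        funext k
        have hk := k.2
        rw [shf_dl h1i hij hjn, Pi.zero_apply, if_neg, if_neg, add_zero]
        · rintro ⟨hp, -⟩
          rw [hpy] at hp; rw [hpx] at cx
          rcases pair_eq_pair.mp hp with ⟨e1, e2⟩ | ⟨e1, e2⟩ <;>
            rcases pair_eq_pair.mp cx with ⟨e3, e4⟩ | ⟨e3, e4⟩ <;> omega
        · rintro ⟨hp, -⟩
          rw [hpy] at hp; rw [hpx] at cx
          rcases pair_eq_pair.mp hp with ⟨e1, e2⟩ | ⟨e1, e2⟩ <;>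
            rcases pair_eq_pair.mp cx with ⟨e3, e4⟩ | ⟨e3, e4⟩ <;> omega
      rw [hs, zero_add]
    · rw [Fg_left (a := x), if_neg cx, map_one, mul_one, Fg_left (a := y), if_pos cy,
        one_mul, homW_of]
      have hs : shf i j (dl x) y.2 = 0 := by
        funext k
        have hk := k.2
        rw [shf_dl h1i hij hjn, Pi.zero_apply, if_neg, if_neg, add_zero]
        · rintro ⟨hp, -⟩
          rw [hpx] at hp; rw [hpy] at cy
          rcases pair_eq_pair.mp hp with ⟨e1, e2⟩ | ⟨e1, e2⟩ <;>
            rcases pair_eq_pair.mp cy with ⟨e3, e4⟩ | ⟨e3, e4⟩ <;> omega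
        · rintro ⟨hp, -⟩
          rw [hpx] at hp; rw [hpy] at cy
          rcases pair_eq_pair.mp hp with ⟨e1, e2⟩ | ⟨e1, e2⟩ <;>
            rcases pair_eq_pair.mp cy with ⟨e3, e4⟩ | ⟨e3, e4⟩ <;> omega
      rw [hs, zero_add]
    · rw [Fg_left (a := x), Fg_left (a := y), if_neg cx, if_neg cy, map_one, map_one]
  · rw [SemidirectProduct.mul_right, SemidirectProduct.mul_right, mul_comm]

lemma mul3_left {n i j : ℕ} (X1 X2 X3 : Hg n i j) (s1 s2 : Sg n)
    (h1 : X1.right = Multiplicative.ofAdd s1) (h2 : X2.right = Multiplicative.ofAdd s2) :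
    (X1 * X2 * X3).left = X1.left * homW i j s1 X2.left * homW i j (s1 + s2) X3.left := by
  rw [SemidirectProduct.mul_left, SemidirectProduct.mul_left, SemidirectProduct.mul_right,
    h1, h2]
  rfl

lemma helper1 : ∀ e1 e2 e3 : ZMod 2, e1 + e2 + e3 = 0 →
    (if e3 = e1 then (1 : ZMod 2) else 0) + (if e2 = 0 then 1 else 0) = 0 := by decide

lemma helper2 : ∀ e1 e2 e3 : ZMod 2, e1 + e2 + e3 = 0 →
    (if e1 = 0 then (1 : ZMod 2) else 0) = (if e3 = e2 then 1 else 0) := by decide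

lemma helper3 : ∀ e1 e2 e3 : ZMod 2, e1 + e2 + e3 = 0 →
    (if e1 = 0 then (1 : ZMod 2) else 0) + (if e2 = e3 then 1 else 0) = 0 := by decide

lemma Fg_tri {n i j : ℕ} (h1i : 1 ≤ i) (hij : i < j) (hjn : j ≤ n)
    (x1 x2 x3 : PPIdx n) (i' j' k' : ℕ) (ho1 : i' < j') (ho2 : j' < k')
    (p1 : pairSet x1.1 = {i', j'}) (p2 : pairSet x2.1 = {i', k'})
    (p3 : pairSet x3.1 = {j', k'}) (he : x1.2 + x2.2 + x3.2 = 0) :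
    Fg i j x1 * Fg i j x2 * Fg i j x3 = Fg i j x3 * Fg i j x2 * Fg i j x1 := by
  apply SemidirectProduct.ext
  · rw [mul3_left (Fg i j x1) (Fg i j x2) (Fg i j x3) (dl x1) (dl x2) rfl rfl,
      mul3_left (Fg i j x3) (Fg i j x2) (Fg i j x1) (dl x3) (dl x2) rfl rfl]
    by_cases c1 : pairSet x1.1 = ({i, j} : Finset ℕ) <;>
      by_cases c2 : pairSet x2.1 = ({i, j} : Finset ℕ) <;>
        by_cases c3 : pairSet x3.1 = ({i, j} : Finset ℕ)
    -- c1 c2 c3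
    · exfalso
      rw [p1] at c1; rw [p2] at c2
      rcases pair_eq_pair.mp c1 with ⟨e1, e2⟩ | ⟨e1, e2⟩ <;>
        rcases pair_eq_pair.mp c2 with ⟨e3, e4⟩ | ⟨e3, e4⟩ <;> omega
    -- c1 c2 ¬c3
    · exfalso
      rw [p1] at c1; rw [p2] at c2
      rcases pair_eq_pair.mp c1 with ⟨e1, e2⟩ | ⟨e1, e2⟩ <;>
        rcases pair_eq_pair.mp c2 with ⟨e3, e4⟩ | ⟨e3, e4⟩ <;> omega
    -- c1 ¬c2 c3
    · exfalso
      rw [p1] at c1; rw [p3] at c3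
      rcases pair_eq_pair.mp c1 with ⟨e1, e2⟩ | ⟨e1, e2⟩ <;>
        rcases pair_eq_pair.mp c3 with ⟨e3, e4⟩ | ⟨e3, e4⟩ <;> omega
    -- c1 ¬c2 ¬c3 : main case 1
    · have hc1 := p1.symm.trans c1
      rcases pair_eq_pair.mp hc1 with ⟨hA, hB⟩ | ⟨hA, hB⟩
      · rw [hA] at p2
        rw [hB] at p3
        rw [hB] at ho2
        have hs : shf i j (dl x3 + dl x2) x1.2 = 0 := by
          rw [shf_add]
          funext k
          have hk := k.2
          rw [Pi.add_apply, Pi.zero_apply, shf_dl h1i hij hjn, shf_dl h1i hij hjn, p3, p2]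
          rw [if_neg (c := ({j, k'} : Finset ℕ) = {i, k.1} ∧ x3.2 = 0) (fun hh => by
            rcases pair_eq_pair.mp hh.1 with ⟨e1, e2⟩ | ⟨e1, e2⟩ <;> omega)]
          rw [if_neg (c := ({i, k'} : Finset ℕ) = {j, k.1} ∧ x2.2 = x1.2) (fun hh => by
            rcases pair_eq_pair.mp hh.1 with ⟨e1, e2⟩ | ⟨e1, e2⟩ <;> omega)]
          rw [zero_add, add_zero]
          have hB' : (({j, k'} : Finset ℕ) = {j, k.1} ∧ x3.2 = x1.2) ↔
              (k.1 = k' ∧ x3.2 = x1.2) := and_congr_left' (by rw [pair_eq_pair]; omega)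
          have hC' : (({i, k'} : Finset ℕ) = {i, k.1} ∧ x2.2 = 0) ↔
              (k.1 = k' ∧ x2.2 = 0) := and_congr_left' (by rw [pair_eq_pair]; omega)
          rw [if_congr hB' rfl rfl, if_congr hC' rfl rfl]
          by_cases hkk : k.1 = k'
          · simp only [hkk, true_and]
            exact helper1 x1.2 x2.2 x3.2 he
          · rw [if_neg (fun hh => hkk hh.1), if_neg (fun hh => hkk hh.1), add_zero]
        rw [Fg_left (a := x1), Fg_left (a := x2), Fg_left (a := x3), if_pos c1, if_neg c2,
          if_neg c3]
        simp [homW_of, hs]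
      · omega
    -- ¬c1 c2 c3
    · exfalso
      rw [p2] at c2; rw [p3] at c3
      rcases pair_eq_pair.mp c2 with ⟨e1, e2⟩ | ⟨e1, e2⟩ <;>
        rcases pair_eq_pair.mp c3 with ⟨e3, e4⟩ | ⟨e3, e4⟩ <;> omega
    -- ¬c1 c2 ¬c3 : main case 2
    · have hc2 := p2.symm.trans c2
      rcases pair_eq_pair.mp hc2 with ⟨hA, hB⟩ | ⟨hA, hB⟩
      · rw [hA] at p1 ho1
        rw [hB] at p3 ho2
        have hs : shf i j (dl x1) x2.2 = shf i j (dl x3) x2.2 := by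
          funext k
          have hk := k.2
          rw [shf_dl h1i hij hjn, shf_dl h1i hij hjn, p1, p3]
          rw [if_neg (c := ({i, j'} : Finset ℕ) = {j, k.1} ∧ x1.2 = x2.2) (fun hh => by
            rcases pair_eq_pair.mp hh.1 with ⟨e1, e2⟩ | ⟨e1, e2⟩ <;> omega)]
          rw [if_neg (c := ({j', j} : Finset ℕ) = {i, k.1} ∧ x3.2 = 0) (fun hh => by
            rcases pair_eq_pair.mp hh.1 with ⟨e1, e2⟩ | ⟨e1, e2⟩ <;> omega)]
          rw [zero_add, add_zero]
          have hA' : (({i, j'} : Finset ℕ) = {i, k.1} ∧ x1.2 = 0) ↔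
              (k.1 = j' ∧ x1.2 = 0) := and_congr_left' (by rw [pair_eq_pair]; omega)
          have hB' : (({j', j} : Finset ℕ) = {j, k.1} ∧ x3.2 = x2.2) ↔
              (k.1 = j' ∧ x3.2 = x2.2) := and_congr_left' (by rw [pair_eq_pair]; omega)
          rw [if_congr hA' rfl rfl, if_congr hB' rfl rfl]
          by_cases hkk : k.1 = j'
          · simp only [hkk, true_and]
            exact helper2 x1.2 x2.2 x3.2 he
          · rw [if_neg (fun hh => hkk hh.1), if_neg (fun hh => hkk hh.1)]
        rw [Fg_left (a := x1), Fg_left (a := x2), Fg_left (a := x3), if_neg c1, if_pos c2,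
          if_neg c3]
        simp [homW_of, hs]
      · omega
    -- ¬c1 ¬c2 c3 : main case 3
    · have hc3 := p3.symm.trans c3
      rcases pair_eq_pair.mp hc3 with ⟨hA, hB⟩ | ⟨hA, hB⟩
      · rw [hA] at p1 ho1
        rw [hA, hB] at ho2
        rw [hB] at p2
        have hs : shf i j (dl x1 + dl x2) x3.2 = 0 := by
          rw [shf_add]
          funext k
          have hk := k.2
          rw [Pi.add_apply, Pi.zero_apply, shf_dl h1i hij hjn, shf_dl h1i hij hjn, p1, p2]
          rw [if_neg (c := ({i', i} : Finset ℕ) = {j, k.1} ∧ x1.2 = x3.2) (fun hh => by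
            rcases pair_eq_pair.mp hh.1 with ⟨e1, e2⟩ | ⟨e1, e2⟩ <;> omega)]
          rw [if_neg (c := ({i', j} : Finset ℕ) = {i, k.1} ∧ x2.2 = 0) (fun hh => by
            rcases pair_eq_pair.mp hh.1 with ⟨e1, e2⟩ | ⟨e1, e2⟩ <;> omega)]
          rw [add_zero, zero_add]
          have hA' : (({i', i} : Finset ℕ) = {i, k.1} ∧ x1.2 = 0) ↔
              (k.1 = i' ∧ x1.2 = 0) := and_congr_left' (by rw [pair_eq_pair]; omega)
          have hB' : (({i', j} : Finset ℕ) = {j, k.1} ∧ x2.2 = x3.2) ↔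
              (k.1 = i' ∧ x2.2 = x3.2) := and_congr_left' (by rw [pair_eq_pair]; omega)
          rw [if_congr hA' rfl rfl, if_congr hB' rfl rfl]
          by_cases hkk : k.1 = i'
          · simp only [hkk, true_and]
            exact helper3 x1.2 x2.2 x3.2 he
          · rw [if_neg (fun hh => hkk hh.1), if_neg (fun hh => hkk hh.1), add_zero]
        rw [Fg_left (a := x1), Fg_left (a := x2), Fg_left (a := x3), if_neg c1, if_neg c2,
          if_pos c3]
        simp [homW_of, hs]
      · omega
    -- ¬c1 ¬c2 ¬c3
    · rw [Fg_left (a := x1), Fg_left (a := x2), Fg_left (a := x3), if_neg c1, if_neg c2,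
        if_neg c3]
      simp
  · simp only [SemidirectProduct.mul_right, Fg_right, ← ofAdd_add]
    exact congrArg Multiplicative.ofAdd (by abel)

lemma lift_fgenP2 {n : ℕ} {M : Type*} [Group M] (f : PPIdx n → M) (a b : ℕ) (e : ZMod 2)
    (h : P2ok n (sort2 a b)) :
    FreeGroup.lift f (fgenP2 n a b e) = f (⟨⟨sort2 a b, h⟩, e⟩) := by
  rw [fgenP2, dif_pos h, FreeGroup.lift_apply_of]

lemma Fg_relators {n i j : ℕ} (h1i : 1 ≤ i) (hij : i < j) (hjn : j ≤ n) :
    ∀ r ∈ relsP2 n, FreeGroup.lift (Fg i j (n := n)) r = 1 := by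
  rintro r ((⟨a, rfl⟩ |
      ⟨i1, j1, k1, l1, e, e', hi1, hin, hj1, hjn', hk1, hkn, hl1, hln,
        d1, d2, d3, d4, d5, d6, rfl⟩) |
    ⟨i1, j1, k1, e1, e2, e3, hh1, hh2, hh3, hh4, he, rfl⟩)
  · rw [map_mul, FreeGroup.lift_apply_of]
    exact Fg_sq h1i hij hjn a
  · have hq1 : P2ok n (sort2 i1 j1) := by
      show 1 ≤ min i1 j1 ∧ min i1 j1 < max i1 j1 ∧ max i1 j1 ≤ n
      omega
    have hq2 : P2ok n (sort2 k1 l1) := by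
      show 1 ≤ min k1 l1 ∧ min k1 l1 < max k1 l1 ∧ max k1 l1 ≤ n
      omega
    rw [map_mul, map_mul, map_mul, map_inv, map_inv,
      lift_fgenP2 _ i1 j1 e hq1, lift_fgenP2 _ k1 l1 e' hq2,
      Fg_comm h1i hij hjn _ _
        (show min i1 j1 ≠ min k1 l1 by omega)
        (show min i1 j1 ≠ max k1 l1 by omega)
        (show max i1 j1 ≠ min k1 l1 by omega)
        (show max i1 j1 ≠ max k1 l1 by omega)]
    group
  · have hq1 : P2ok n (sort2 i1 j1) := by
      show 1 ≤ min i1 j1 ∧ min i1 j1 < max i1 j1 ∧ max i1 j1 ≤ n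
      omega
    have hq2 : P2ok n (sort2 i1 k1) := by
      show 1 ≤ min i1 k1 ∧ min i1 k1 < max i1 k1 ∧ max i1 k1 ≤ n
      omega
    have hq3 : P2ok n (sort2 j1 k1) := by
      show 1 ≤ min j1 k1 ∧ min j1 k1 < max j1 k1 ∧ max j1 k1 ≤ n
      omega
    rw [map_mul, map_mul, map_mul, map_inv, map_mul, map_mul,
      lift_fgenP2 _ i1 j1 e1 hq1, lift_fgenP2 _ i1 k1 e2 hq2, lift_fgenP2 _ j1 k1 e3 hq3,
      Fg_tri h1i hij hjn _ _ _ i1 j1 k1 hh2 hh3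
        (pairSet_sort2 i1 j1 hq1) (pairSet_sort2 i1 k1 hq2) (pairSet_sort2 j1 k1 hq3) he]
    group

end Statement10Aux

theorem statement_10 (n i j : ℕ) (hn : 3 ≤ n)
    (hi : 1 ≤ i) (hij : i < j) (hj : j ≤ n)
    (β β' : List (PPIdx n)) (h : toGP2 β = toGP2 β') :
    wP2 i j β = wP2 i j β' := by
  have hrel := Fg_relators (n := n) (i := i) (j := j) hi hij hj
  let Φ : GP2 n →* Hg n i j := PresentedGroup.toGroup hrel
  have key : ∀ γ : List (PPIdx n), wP2 i j γ = piW i j ((Φ (toGP2 γ)).left) := by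
    intro γ
    have hmap : Φ (toGP2 γ) = (γ.map (Fg i j)).prod := by
      unfold toGP2
      rw [map_list_prod, List.map_map]
      refine congrArg List.prod (List.map_congr_left fun a _ => ?_)
      exact PresentedGroup.toGroup.of hrel
    rw [wP2_through hi hij hj γ, hmap]
  rw [key β, key β', h]

end GnkBrunnian
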